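/- Let ε > 0 and let G be a nonempty finite simple graph with ρ(G) ≥ exp(e/ε). Then for every integer k with 1 ≤ k ≤ ρ(G)/ln ρ(G), G is k-DP-colorable with probability at most ε. -/

import Mathlib

namespace DP

/-- Adjacency in the cover graph `H_σ` determined by the tuple `σ` of permutations
(one permutation of `Fin k` per edge of `G`): for an edge `uv` of `G` with `u < v`,
the vertex `(u, i)` is adjacent to `(v, σ_{uv} i)`, and there are no other edges. -/
def coverAdj {V : Type*} [LinearOrder V] (G : SimpleGraph V) (k : ℕ)
    (σ : G.edgeSet → Equiv.Perm (Fin k)) (p q : V × Fin k) : Prop :=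
  ∃ h : G.Adj p.1 q.1,
    (p.1 < q.1 ∧ (σ ⟨s(p.1, q.1), G.mem_edgeSet.mpr h⟩) p.2 = q.2) ∨
    (q.1 < p.1 ∧ (σ ⟨s(p.1, q.1), G.mem_edgeSet.mpr h⟩) q.2 = p.2)

/-- `T` is an independent `b`-fold transversal of the cover `H_σ`: it contains exactly
`b` elements of `{v} × Fin k` for each vertex `v`, and no two of its elements are
adjacent in `H_σ`. -/
def IsIndepTransversal {V : Type*} [LinearOrder V] (G : SimpleGraph V) (k b : ℕ)
    (σ : G.edgeSet → Equiv.Perm (Fin k)) (T : Finset (V × Fin k)) : Prop :=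
  (∀ v : V, (T.filter (fun p => p.1 = v)).card = b) ∧
    ∀ p ∈ T, ∀ q ∈ T, ¬ coverAdj G k σ p q

/-- The probability, over a uniformly random tuple `σ` of permutations (one per edge),
that the cover graph `H_σ` admits an independent `b`-fold transversal. -/
noncomputable def probColorable {V : Type*} [LinearOrder V] (G : SimpleGraph V)
    (k b : ℕ) : ℝ :=
  (Nat.card {σ : G.edgeSet → Equiv.Perm (Fin k) //
      ∃ T : Finset (V × Fin k), IsIndepTransversal G k b σ T} : ℝ) /
    (Nat.card (G.edgeSet → Equiv.Perm (Fin k)) : ℝ)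

/-- The maximum density `ρ(G)`: the maximum of `|E(G')|/|V(G')|` over all nonempty
subgraphs `G'` of `G`. -/
noncomputable def maxDensity {V : Type*} (G : SimpleGraph V) : ℝ :=
  sSup {d : ℝ | ∃ H : G.Subgraph, H.verts.Nonempty ∧
    d = (H.edgeSet.ncard : ℝ) / (H.verts.ncard : ℝ)}

open Finset

lemma sym2_mk_inf_sup {α : Type*} [LinearOrder α] (e : Sym2 α) : s(e.inf, e.sup) = e := by
  induction e using Sym2.ind with
  | _ a b =>
    rcases le_total a b with h | h
    · simp [inf_eq_left.mpr h, sup_eq_right.mpr h]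
    · rw [Sym2.inf_mk, Sym2.sup_mk, inf_eq_right.mpr h, sup_eq_left.mpr h]
      exact Sym2.eq_swap

lemma perm_fiber_card (k : ℕ) (a b : Fin k) :
    (univ.filter fun π : Equiv.Perm (Fin k) => π a = b).card * k = Nat.factorial k := by
  classical
  have hfib : ∀ b c : Fin k,
      (univ.filter fun π : Equiv.Perm (Fin k) => π a = b).card
        = (univ.filter fun π : Equiv.Perm (Fin k) => π a = c).card := by
    intro b c
    apply Finset.card_bij (fun π _ => Equiv.swap b c * π)
    · intro π hπ
      rw [mem_filter] at hπ ⊢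
      refine ⟨mem_univ _, ?_⟩
      rw [Equiv.Perm.mul_apply, hπ.2, Equiv.swap_apply_left]
    · intro π1 h1 π2 h2 h
      exact mul_left_cancel h
    · intro π hπ
      rw [mem_filter] at hπ
      refine ⟨Equiv.swap b c * π, ?_, ?_⟩
      · rw [mem_filter]
        refine ⟨mem_univ _, ?_⟩
        rw [Equiv.Perm.mul_apply, hπ.2, Equiv.swap_apply_right]
      · rw [← mul_assoc, Equiv.swap_mul_self, one_mul]
  have hsum : ∑ c : Fin k, (univ.filter fun π : Equiv.Perm (Fin k) => π a = c).card
      = Nat.factorial k := by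
    rw [← Finset.card_eq_sum_card_fiberwise (fun π _ => mem_univ (π a))]
    rw [Finset.card_univ, Fintype.card_perm, Fintype.card_fin]
  calc (univ.filter fun π : Equiv.Perm (Fin k) => π a = b).card * k
      = ∑ _c : Fin k, (univ.filter fun π : Equiv.Perm (Fin k) => π a = b).card := by
        rw [Finset.sum_const, Finset.card_univ, Fintype.card_fin, smul_eq_mul, mul_comm]
    _ = ∑ c : Fin k, (univ.filter fun π : Equiv.Perm (Fin k) => π a = c).card :=
        Finset.sum_congr rfl fun c _ => hfib b c
    _ = Nat.factorial k := hsum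

lemma perm_ne_card (k : ℕ) (hk : 0 < k) (a b : Fin k) :
    (univ.filter fun π : Equiv.Perm (Fin k) => π a ≠ b).card
      = Nat.factorial k - Nat.factorial k / k := by
  classical
  have h1 := perm_fiber_card k a b
  have heq : Nat.factorial k / k = (univ.filter fun π : Equiv.Perm (Fin k) => π a = b).card :=
    Nat.div_eq_of_eq_mul_left hk h1.symm
  have h2 := Finset.card_filter_add_card_filter_not
    (s := (univ : Finset (Equiv.Perm (Fin k)))) (p := fun π => π a = b)
  have h2' : (univ.filter fun π : Equiv.Perm (Fin k) => π a = b).card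
      + (univ.filter fun π : Equiv.Perm (Fin k) => π a ≠ b).card = Nat.factorial k := by
    simpa [Finset.card_univ, Fintype.card_perm, Fintype.card_fin, ne_eq] using h2
  omega

lemma supported_card (n k : ℕ) (hk : 0 < k) (s : Finset (Fin n)) :
    (univ.filter fun g : Fin n → Fin k => ∀ v ∉ s, g v = ⟨0, hk⟩).card = k ^ s.card := by
  classical
  rw [← Fintype.card_subtype]
  have e : {g : Fin n → Fin k // ∀ v ∉ s, g v = ⟨0, hk⟩} ≃ (s → Fin k) :=
    { toFun := fun g v => g.1 v
      invFun := fun h => ⟨fun v => if hv : v ∈ s then h ⟨v, hv⟩ else ⟨0, hk⟩,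
        fun v hv => by simp [hv]⟩
      left_inv := fun g => by
        ext v
        by_cases hv : v ∈ s <;> simp [hv, g.2]
      right_inv := fun h => by
        ext v
        simp [v.2] }
  rw [Fintype.card_congr e, Fintype.card_fun, Fintype.card_fin, Fintype.card_coe]

lemma main_count {n k : ℕ} (hk0 : 0 < k) (G : SimpleGraph (Fin n)) (H : G.Subgraph) :
    probColorable G k 1 ≤
      (k : ℝ) ^ H.verts.ncard * (((k : ℝ) - 1) / k) ^ H.edgeSet.ncard := by
  classical
  haveI : Fintype G.edgeSet := Fintype.ofFinite _
  set Q := Nat.factorial k with hQdef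
  set m := Fintype.card G.edgeSet with hmdef
  set P : G.edgeSet → Prop := fun e => e.val ∈ H.edgeSet with hPdef
  set m' := (univ.filter P).card with hm'def
  have hm'm : m' ≤ m := by
    rw [hm'def, hmdef]
    exact le_trans (Finset.card_filter_le _ _) (le_of_eq (Finset.card_univ))
  set z : Fin k := ⟨0, hk0⟩ with hzdef
  set AF := (Set.toFinite H.verts).toFinset with hAFdef
  set Gs : Finset (Fin n → Fin k) := univ.filter (fun g => ∀ v ∉ AF, g v = z) with hGsdef
  set C : (Fin n → Fin k) → G.edgeSet → Finset (Equiv.Perm (Fin k)) :=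
    fun g e => if e.val ∈ H.edgeSet then
      univ.filter (fun π => π (g e.val.inf) ≠ g e.val.sup) else univ with hCdef
  -- inclusion
  have hsub : (univ.filter fun σ : G.edgeSet → Equiv.Perm (Fin k) =>
      ∃ T, IsIndepTransversal G k 1 σ T) ⊆ Gs.biUnion (fun g => Fintype.piFinset (C g)) := by
    intro σ hσ
    rw [mem_filter] at hσ
    obtain ⟨-, T, hT1, hT2⟩ := hσ
    have h1 : ∀ v : Fin n, ∃ i : Fin k, (v, i) ∈ T ∧ ∀ j : Fin k, (v, j) ∈ T → j = i := by
      intro v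
      obtain ⟨a, ha⟩ := Finset.card_eq_one.mp (hT1 v)
      obtain ⟨hamem, hauniq⟩ := Finset.eq_singleton_iff_unique_mem.mp ha
      simp only [Finset.mem_filter] at hamem
      obtain ⟨haT, hav⟩ := hamem
      refine ⟨a.2, ?_, ?_⟩
      · have hva : (v, a.2) = a := by rw [← hav]
        rw [hva]; exact haT
      · intro j hj
        refine congrArg Prod.snd (hauniq (v, j) ?_)
        simp only [Finset.mem_filter]
        exact ⟨hj, trivial⟩
    choose f hfT hfU using h1
    set g : Fin n → Fin k := fun v => if v ∈ H.verts then f v else z with hg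
    rw [Finset.mem_biUnion]
    refine ⟨g, ?_, ?_⟩
    · rw [hGsdef, mem_filter]
      refine ⟨mem_univ _, fun v hv => ?_⟩
      rw [hAFdef, Set.Finite.mem_toFinset] at hv
      simp only [hg, if_neg hv]
    · rw [Fintype.mem_piFinset]
      intro e
      by_cases he : e.val ∈ H.edgeSet
      · simp only [hCdef, if_pos he]
        rw [mem_filter]
        refine ⟨mem_univ _, ?_⟩
        have hab : s(e.val.inf, e.val.sup) = e.val := sym2_mk_inf_sup e.val
        have hGadj : G.Adj e.val.inf e.val.sup := G.mem_edgeSet.mp (by rw [hab]; exact e.2)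
        have hHadj : H.Adj e.val.inf e.val.sup :=
          SimpleGraph.Subgraph.mem_edgeSet.mp (by rw [hab]; exact he)
        have hlt : e.val.inf < e.val.sup := lt_of_le_of_ne (Sym2.inf_le_sup e.val) hGadj.ne
        have hga : g e.val.inf = f e.val.inf := if_pos (H.edge_vert hHadj)
        have hgb : g e.val.sup = f e.val.sup := if_pos (H.edge_vert hHadj.symm)
        rw [hga, hgb]
        intro hcontra
        apply hT2 (e.val.inf, f e.val.inf) (hfT _) (e.val.sup, f e.val.sup) (hfT _)
        refine ⟨hGadj, Or.inl ⟨hlt, ?_⟩⟩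
        have hee : (⟨s(e.val.inf, e.val.sup), G.mem_edgeSet.mpr hGadj⟩ : G.edgeSet) = e :=
          Subtype.ext hab
        rw [hee]
        exact hcontra
      · simp only [hCdef, if_neg he]
        exact mem_univ _
  -- cardinality of each piFinset
  have hCcard : ∀ g : Fin n → Fin k,
      (Fintype.piFinset (C g)).card = (Q - Q / k) ^ m' * Q ^ (m - m') := by
    intro g
    rw [Fintype.card_piFinset]
    have hce : ∀ e : G.edgeSet, (C g e).card = if P e then (Q - Q / k) else Q := by
      intro e
      by_cases he : P e
      · simp only [hCdef, if_pos (show e.val ∈ H.edgeSet from he), if_pos he]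
        exact perm_ne_card k hk0 _ _
      · simp only [hCdef, if_neg (show e.val ∉ H.edgeSet from he), if_neg he]
        rw [Finset.card_univ, Fintype.card_perm, Fintype.card_fin]
    rw [Finset.prod_congr rfl (fun e _ => hce e), Finset.prod_ite, Finset.prod_const,
      Finset.prod_const]
    have hneg : (univ.filter (fun e : G.edgeSet => ¬ P e)).card = m - m' := by
      have h := Finset.card_filter_add_card_filter_not
        (s := (univ : Finset G.edgeSet)) (p := P)
      rw [Finset.card_univ] at h
      omega
    rw [hneg]
  -- numerator bound
  have hnum : (Nat.card {σ : G.edgeSet → Equiv.Perm (Fin k) //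
      ∃ T : Finset (Fin n × Fin k), IsIndepTransversal G k 1 σ T})
      ≤ k ^ AF.card * ((Q - Q / k) ^ m' * Q ^ (m - m')) := by
    rw [Nat.card_eq_fintype_card, Fintype.card_subtype]
    calc (univ.filter fun σ : G.edgeSet → Equiv.Perm (Fin k) =>
          ∃ T, IsIndepTransversal G k 1 σ T).card
        ≤ (Gs.biUnion (fun g => Fintype.piFinset (C g))).card := Finset.card_le_card hsub
      _ ≤ ∑ g ∈ Gs, (Fintype.piFinset (C g)).card := Finset.card_biUnion_le
      _ = Gs.card * ((Q - Q / k) ^ m' * Q ^ (m - m')) := by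
          rw [Finset.sum_congr rfl (fun g _ => hCcard g), Finset.sum_const, smul_eq_mul]
      _ = k ^ AF.card * ((Q - Q / k) ^ m' * Q ^ (m - m')) := by
          rw [hGsdef, supported_card n k hk0 AF]
  -- translate cardinalities
  have hvcard : AF.card = H.verts.ncard := (Set.ncard_eq_toFinset_card _ _).symm
  have hm'card : m' = H.edgeSet.ncard := by
    rw [hm'def, ← Fintype.card_subtype, ← Nat.card_eq_fintype_card,
      ← Nat.card_coe_set_eq]
    exact Nat.card_congr (Equiv.subtypeSubtypeEquivSubtype fun hx => H.edgeSet_subset hx)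
  have htot : (Nat.card (G.edgeSet → Equiv.Perm (Fin k))) = Q ^ m := by
    rw [Nat.card_eq_fintype_card, Fintype.card_fun, Fintype.card_perm, Fintype.card_fin]
  -- real arithmetic
  have hQpos : (0 : ℝ) < (Q : ℝ) := by
    exact_mod_cast Nat.factorial_pos k
  have hkR : (0 : ℝ) < (k : ℝ) := by exact_mod_cast hk0
  have hQk : ((Q - Q / k : ℕ) : ℝ) = (Q : ℝ) * (((k : ℝ) - 1) / k) := by
    have hdvd : k ∣ Q := Nat.dvd_factorial hk0 le_rfl
    have hle : Q / k ≤ Q := Nat.div_le_self _ _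
    rw [Nat.cast_sub hle, Nat.cast_div hdvd (by exact_mod_cast hk0.ne')]
    field_simp
  rw [probColorable, htot, Nat.cast_pow]
  rw [div_le_iff₀ (by positivity)]
  calc (Nat.card {σ : G.edgeSet → Equiv.Perm (Fin k) //
        ∃ T : Finset (Fin n × Fin k), IsIndepTransversal G k 1 σ T} : ℝ)
      ≤ (k : ℝ) ^ AF.card * (((Q - Q / k : ℕ) : ℝ) ^ m' * (Q : ℝ) ^ (m - m')) := by
        exact_mod_cast hnum
    _ = (k : ℝ) ^ H.verts.ncard * (((k : ℝ) - 1) / k) ^ H.edgeSet.ncard * (Q : ℝ) ^ m := by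
        rw [hvcard, hQk, mul_pow, ← hm'card]
        rw [show (Q : ℝ) ^ m = (Q : ℝ) ^ m' * (Q : ℝ) ^ (m - m') by
          rw [← pow_add, Nat.add_sub_cancel' hm'm]]
        ring

/-- Let `ε > 0` and let `G` be a nonempty graph with `ρ(G) ≥ exp(e/ε)`. If
`1 ≤ k ≤ ρ(G)/ln ρ(G)`, then `G` is `k`-DP-colorable with probability at most `ε`. -/
theorem statement_0 (ε : ℝ) (hε : 0 < ε) (n : ℕ) (hn : 0 < n)
    (G : SimpleGraph (Fin n)) (hρ : Real.exp (Real.exp 1 / ε) ≤ maxDensity G)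
    (k : ℕ) (hk1 : 1 ≤ k)
    (hk2 : (k : ℝ) ≤ maxDensity G / Real.log (maxDensity G)) :
    probColorable G k 1 ≤ ε := by
  classical
  by_cases hε1 : 1 ≤ ε
  · refine le_trans ?_ hε1
    rw [probColorable]
    haveI : Fintype G.edgeSet := Fintype.ofFinite _
    have hpos : 0 < (Nat.card (G.edgeSet → Equiv.Perm (Fin k)) : ℝ) := by
      have h0 : 0 < Nat.card (G.edgeSet → Equiv.Perm (Fin k)) := Nat.card_pos
      exact_mod_cast h0
    rw [div_le_one hpos]
    have hle : Nat.card {σ : G.edgeSet → Equiv.Perm (Fin k) //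
        ∃ T : Finset (Fin n × Fin k), IsIndepTransversal G k 1 σ T}
        ≤ Nat.card (G.edgeSet → Equiv.Perm (Fin k)) := by
      rw [Nat.card_eq_fintype_card, Nat.card_eq_fintype_card]
      exact Fintype.card_subtype_le _
    exact_mod_cast hle
  · push_neg at hε1
    have hk0 : 0 < k := hk1
    have hkpos : (0 : ℝ) < k := by exact_mod_cast hk0
    have hρpos : (0 : ℝ) < maxDensity G := lt_of_lt_of_le (Real.exp_pos _) hρ
    have hLlb : Real.exp 1 / ε ≤ Real.log (maxDensity G) :=
      (Real.le_log_iff_exp_le hρpos).mpr hρ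
    set L := Real.log (maxDensity G) with hLdef
    have h2e : (2 : ℝ) ≤ Real.exp 1 := by linarith [Real.add_one_le_exp 1]
    have heε : Real.exp 1 ≤ Real.exp 1 / ε := by
      rw [le_div_iff₀ hε]
      nlinarith [Real.exp_pos 1]
    have hL1 : (1 : ℝ) < L := by linarith
    have hLpos : (0 : ℝ) < L := by linarith
    -- extract a dense subgraph
    haveI : Nonempty (Fin n) := ⟨⟨0, hn⟩⟩
    have hsetne : {d : ℝ | ∃ H : G.Subgraph, H.verts.Nonempty ∧
        d = (H.edgeSet.ncard : ℝ) / (H.verts.ncard : ℝ)}.Nonempty := by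
      refine ⟨_, ⊤, ?_, rfl⟩
      rw [SimpleGraph.Subgraph.verts_top]
      exact Set.univ_nonempty
    have hhalf : maxDensity G - 1/2 < sSup {d : ℝ | ∃ H : G.Subgraph, H.verts.Nonempty ∧
        d = (H.edgeSet.ncard : ℝ) / (H.verts.ncard : ℝ)} := by
      rw [← maxDensity]
      linarith
    obtain ⟨d, hdmem, hdgt⟩ := exists_lt_of_lt_csSup hsetne hhalf
    obtain ⟨H, hHne, rfl⟩ := hdmem
    have hvfin : H.verts.Finite := Set.toFinite _
    have hv1 : 1 ≤ H.verts.ncard := (Set.ncard_pos hvfin).mpr hHne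
    have hvR : (1 : ℝ) ≤ (H.verts.ncard : ℝ) := by exact_mod_cast hv1
    have hvpos : (0 : ℝ) < (H.verts.ncard : ℝ) := by linarith
    have hm'R : (maxDensity G - 1/2) * (H.verts.ncard : ℝ) ≤ (H.edgeSet.ncard : ℝ) :=
      le_of_lt ((lt_div_iff₀ hvpos).mp hdgt)
    have hmain := main_count hk0 G H
    set vH := H.verts.ncard with hvHdef
    set mH := H.edgeSet.ncard with hmHdef
    -- exponential bounds
    have hb1 : (k : ℝ) ^ vH = Real.exp (vH * Real.log k) := by
      rw [← Real.log_pow, Real.exp_log (pow_pos hkpos vH)]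
    have hfrac0 : (0 : ℝ) ≤ ((k : ℝ) - 1) / k := by
      apply div_nonneg _ hkpos.le
      have : (1 : ℝ) ≤ k := by exact_mod_cast hk1
      linarith
    have hb2 : (((k : ℝ) - 1) / k) ^ mH ≤ Real.exp (-((mH : ℝ) / k)) := by
      have h1 : ((k : ℝ) - 1) / k ≤ Real.exp (-(1/k)) := by
        have heq : ((k : ℝ) - 1) / k = -(1/k) + 1 := by
          field_simp
          ring
        rw [heq]
        exact Real.add_one_le_exp _
      calc (((k : ℝ) - 1) / k) ^ mH ≤ (Real.exp (-(1/k))) ^ mH :=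
            pow_le_pow_left₀ hfrac0 h1 mH
        _ = Real.exp (-((mH : ℝ) / k)) := by
            rw [← Real.exp_nat_mul]
            congr 1
            field_simp
    -- exponent estimate
    have hlogk : Real.log k ≤ L - Real.log L := by
      have hkle : (k : ℝ) ≤ maxDensity G / L := hk2
      have hq : (0 : ℝ) < maxDensity G / L := by positivity
      have h := (Real.log_le_log_iff hkpos hq).mpr hkle
      rwa [Real.log_div (ne_of_gt hρpos) (ne_of_gt hLpos)] at h
    have hinv : L / maxDensity G ≤ 1 / (k : ℝ) := by
      rw [div_le_div_iff₀ hρpos hkpos]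
      have h := (le_div_iff₀ hLpos).mp hk2
      linarith
    have hρhalf : (0 : ℝ) ≤ maxDensity G - 1/2 := by
      have : (1 : ℝ) < maxDensity G := by
        calc (1 : ℝ) = Real.exp 0 := (Real.exp_zero).symm
          _ < Real.exp (Real.exp 1 / ε) := Real.exp_lt_exp.mpr (by positivity)
          _ ≤ maxDensity G := hρ
      linarith
    have hkm : (maxDensity G - 1/2) * (L / maxDensity G)
        ≤ (maxDensity G - 1/2) / k := by
      calc (maxDensity G - 1/2) * (L / maxDensity G)
          ≤ (maxDensity G - 1/2) * (1 / k) := mul_le_mul_of_nonneg_left hinv hρhalf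
        _ = (maxDensity G - 1/2) / k := by rw [mul_one_div]
    have hexp1 : (maxDensity G - 1/2) * (L / maxDensity G)
        = L - L / (2 * maxDensity G) := by
      field_simp
    have hlogρ : L ≤ maxDensity G / Real.exp 1 := by
      have h := Real.log_le_sub_one_of_pos
        (show (0:ℝ) < maxDensity G / Real.exp 1 by positivity)
      rw [Real.log_div (ne_of_gt hρpos) (ne_of_gt (Real.exp_pos 1)), Real.log_exp] at h
      linarith
    have hquarter : L / (2 * maxDensity G) ≤ 1/4 := by
      rw [div_le_iff₀ (by positivity)]
      have h1 : L * Real.exp 1 ≤ maxDensity G := by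
        rw [← le_div_iff₀ (Real.exp_pos 1)]
        exact hlogρ
      nlinarith
    have hlogL : 1 - Real.log ε ≤ Real.log L := by
      have hq : (0 : ℝ) < Real.exp 1 / ε := by positivity
      have h := (Real.log_le_log_iff hq hLpos).mpr hLlb
      rwa [Real.log_div (ne_of_gt (Real.exp_pos 1)) (ne_of_gt hε), Real.log_exp] at h
    have hlogε : Real.log ε < 0 := Real.log_neg hε hε1
    have hc : Real.log k - (maxDensity G - 1/2) / k ≤ 1/4 - Real.log L := by
      have h1 : L - L / (2 * maxDensity G) ≤ (maxDensity G - 1/2) / k := by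
        rw [← hexp1]; exact hkm
      linarith
    have hcneg : Real.log k - (maxDensity G - 1/2) / k ≤ 0 := by linarith
    have hE1 : (vH : ℝ) * Real.log k - (mH : ℝ) / k
        ≤ (vH : ℝ) * (Real.log k - (maxDensity G - 1/2) / k) := by
      rw [mul_sub]
      have h1 : (vH : ℝ) * ((maxDensity G - 1/2) / k) ≤ (mH : ℝ) / k := by
        rw [show (vH : ℝ) * ((maxDensity G - 1/2) / k)
            = ((maxDensity G - 1/2) * vH) / k by ring]
        exact div_le_div_of_nonneg_right hm'R hkpos.le
      linarith
    have hE2 : (vH : ℝ) * (Real.log k - (maxDensity G - 1/2) / k)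
        ≤ 1 * (Real.log k - (maxDensity G - 1/2) / k) :=
      mul_le_mul_of_nonpos_right hvR hcneg
    have hE : (vH : ℝ) * Real.log k - (mH : ℝ) / k ≤ 1/4 - Real.log L := by
      have h2 : 1 * (Real.log k - (maxDensity G - 1/2) / k)
          = Real.log k - (maxDensity G - 1/2) / k := one_mul _
      linarith
    have hεL : Real.exp 1 ≤ ε * L := by
      have h := (div_le_iff₀ hε).mp hLlb
      linarith
    calc probColorable G k 1
        ≤ (k : ℝ) ^ vH * (((k : ℝ) - 1) / k) ^ mH := hmain
      _ ≤ Real.exp ((vH : ℝ) * Real.log k) * Real.exp (-((mH : ℝ) / k)) := by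
          rw [hb1]
          exact mul_le_mul_of_nonneg_left hb2 (Real.exp_pos _).le
      _ = Real.exp ((vH : ℝ) * Real.log k - (mH : ℝ) / k) := by
          rw [← Real.exp_add]
          ring_nf
      _ ≤ Real.exp (1/4 - Real.log L) := Real.exp_le_exp.mpr hE
      _ = Real.exp (1/4) / L := by rw [Real.exp_sub, Real.exp_log hLpos]
      _ ≤ ε := by
          rw [div_le_iff₀ hLpos]
          have h14 : Real.exp (1/4 : ℝ) ≤ Real.exp 1 := Real.exp_le_exp.mpr (by norm_num)
          linarith

end DP
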